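/- arXiv:2008.07554 — 5 statements merged into one kernel-verified Lean document; each statement's English description precedes it below -/
import Mathlib

section
/- Let 1 < q < p, and let F(z₁,z₂) = q z₁^(1-1/q) z₂^(1/p). If t ∈ (0,1), z ∈ [0,∞) × [0,∞), z̄ ∈ (0,∞) × (0,∞), and z ≠ z̄, then F((1-t)z + t z̄) > (1-t)F(z) + t F(z̄). -/
open Set

/-- Strict two-point weighted AM-GM. -/
lemma amgm2_strict {x y α : ℝ} (hx : 0 < x) (hy : 0 < y) (hα : 0 < α) (hα1 : α < 1)
    (hxy : x ≠ y) : x ^ α * y ^ (1 - α) < α * x + (1 - α) * y := by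
  have h := strictConcaveOn_log_Ioi.2 (mem_Ioi.2 hx) (mem_Ioi.2 hy) hxy hα
    (by linarith : (0:ℝ) < 1 - α) (by ring)
  simp only [smul_eq_mul] at h
  have hpos : 0 < α * x + (1 - α) * y := by nlinarith
  calc x ^ α * y ^ (1 - α)
      = Real.exp (α * Real.log x + (1 - α) * Real.log y) := by
        rw [Real.exp_add, Real.rpow_def_of_pos hx, Real.rpow_def_of_pos hy]
        ring_nf
    _ < Real.exp (Real.log (α * x + (1 - α) * y)) := Real.exp_lt_exp.2 h
    _ = α * x + (1 - α) * y := Real.exp_log hpos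

/-- Strict AM-GM with subunital weights: `x^a y^b < a x + b y + (1-a-b)` unless `x = y = 1`. -/
lemma amgm3_strict {x y a b : ℝ} (hx : 0 < x) (hy : 0 < y) (ha : 0 < a) (hb : 0 < b)
    (hab : a + b < 1) (hne : x ≠ 1 ∨ y ≠ 1) :
    x ^ a * y ^ b < a * x + b * y + (1 - (a + b)) := by
  set r := a + b with hr
  have hr0 : 0 < r := by positivity
  have hr1 : r < 1 := hab
  by_cases hxy : x = y
  · subst hxy
    have hx1 : x ≠ 1 := by rcases hne with h | h <;> exact h
    have key := amgm2_strict hx one_pos hr0 hr1 hx1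
    rw [Real.one_rpow, mul_one, mul_one] at key
    calc x ^ a * x ^ b = x ^ r := by rw [← Real.rpow_add hx]
      _ < r * x + (1 - r) := key
      _ = a * x + b * x + (1 - (a + b)) := by rw [hr]; ring
  · have hsum : a / r + b / r = 1 := by field_simp; exact hr.symm
    have key := amgm2_strict hx hy (by positivity : 0 < a / r)
      ((div_lt_one hr0).2 (by dsimp only [r]; linarith)) hxy
    have hbr : 1 - a / r = b / r := by field_simp; ring
    rw [hbr] at key
    set s := a / r * x + b / r * y with hs
    have hs0 : 0 < s := by positivity
    have hg0 : (0:ℝ) ≤ x ^ (a / r) * y ^ (b / r) := by positivity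
    have step1 : x ^ a * y ^ b < s ^ r := by
      have : (x ^ (a / r) * y ^ (b / r)) ^ r < s ^ r :=
        Real.rpow_lt_rpow hg0 key hr0
      calc x ^ a * y ^ b = (x ^ (a / r) * y ^ (b / r)) ^ r := by
            rw [Real.mul_rpow (by positivity) (by positivity), ← Real.rpow_mul hx.le,
              ← Real.rpow_mul hy.le, div_mul_cancel₀ _ hr0.ne', div_mul_cancel₀ _ hr0.ne']
        _ < s ^ r := this
    have step2 : s ^ r ≤ r * s + (1 - r) := by
      have := Real.geom_mean_le_arith_mean2_weighted (le_of_lt hr0)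
        (by linarith : (0:ℝ) ≤ 1 - r) (le_of_lt hs0) zero_le_one (by ring)
      rwa [Real.one_rpow, mul_one, mul_one] at this
    have hrs : r * s = a * x + b * y := by rw [hs]; field_simp
    calc x ^ a * y ^ b < s ^ r := step1
      _ ≤ r * s + (1 - r) := step2
      _ = a * x + b * y + (1 - (a + b)) := by rw [hrs]

/-- For `1 < q < p` and `F(z₁,z₂) = q·z₁^(1-1/q)·z₂^(1/p)`: if `t ∈ (0,1)`,
`z ∈ [0,∞)²`, `z̄ ∈ (0,∞)²` and `z ≠ z̄`, then
`F((1-t)z + t z̄) > (1-t)F(z) + t F(z̄)`. -/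
theorem stmt_2 (p q : ℝ) (hq : 1 < q) (hqp : q < p)
    (F : ℝ × ℝ → ℝ)
    (hF : ∀ z : ℝ × ℝ, F z = q * z.1 ^ (1 - 1 / q) * z.2 ^ (1 / p))
    (t : ℝ) (ht : t ∈ Ioo (0:ℝ) 1)
    (z : ℝ × ℝ) (hz : z ∈ Ici (0:ℝ) ×ˢ Ici (0:ℝ))
    (zb : ℝ × ℝ) (hzb : zb ∈ Ioi (0:ℝ) ×ˢ Ioi (0:ℝ))
    (hne : z ≠ zb) :
    (1 - t) * F z + t * F zb < F ((1 - t) • z + t • zb) := by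
  obtain ⟨ht0, ht1⟩ := ht
  have hz1 : (0:ℝ) ≤ z.1 := hz.1
  have hz2 : (0:ℝ) ≤ z.2 := hz.2
  have hb1 : (0:ℝ) < zb.1 := hzb.1
  have hb2 : (0:ℝ) < zb.2 := hzb.2
  have hq0 : (0:ℝ) < q := by linarith
  have hp0 : (0:ℝ) < p := by linarith
  set a : ℝ := 1 - 1 / q with ha_def
  set b : ℝ := 1 / p with hb_def
  have ha : 0 < a := by
    have : 1 / q < 1 := by rw [div_lt_one hq0]; linarith
    simp only [ha_def]; linarith
  have hb : 0 < b := by positivity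
  have hab : a + b < 1 := by
    have : 1 / p < 1 / q := one_div_lt_one_div_of_lt hq0 hqp
    simp only [ha_def, hb_def]; linarith
  set u1 : ℝ := (1 - t) * z.1 + t * zb.1 with hu1_def
  set u2 : ℝ := (1 - t) * z.2 + t * zb.2 with hu2_def
  have hu1 : 0 < u1 := by
    have : 0 ≤ (1 - t) * z.1 := by nlinarith
    nlinarith
  have hu2 : 0 < u2 := by
    have : 0 ≤ (1 - t) * z.2 := by nlinarith
    nlinarith
  have hfst : ((1 - t) • z + t • zb).1 = u1 := rfl
  have hsnd : ((1 - t) • z + t • zb).2 = u2 := rfl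
  rw [hF, hF, hF, hfst, hsnd]
  by_cases hzpos : 0 < z.1 ∧ 0 < z.2
  · -- interior case
    obtain ⟨hz1', hz2'⟩ := hzpos
    have hne' : z.1 / u1 ≠ 1 ∨ z.2 / u2 ≠ 1 := by
      have h : z.1 ≠ zb.1 ∨ z.2 ≠ zb.2 := by
        by_contra hc
        push_neg at hc
        exact hne (Prod.ext hc.1 hc.2)
      rcases h with h | h
      · left
        intro hc
        rw [div_eq_one_iff_eq hu1.ne'] at hc
        apply h
        have : t * z.1 = t * zb.1 := by rw [hu1_def] at hc; linarith
        exact mul_left_cancel₀ ht0.ne' this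
      · right
        intro hc
        rw [div_eq_one_iff_eq hu2.ne'] at hc
        apply h
        have : t * z.2 = t * zb.2 := by rw [hu2_def] at hc; linarith
        exact mul_left_cancel₀ ht0.ne' this
    have key1 := amgm3_strict (div_pos hz1' hu1) (div_pos hz2' hu2) ha hb hab hne'
    have key2 := Real.geom_mean_le_arith_mean3_weighted ha.le hb.le
      (by linarith : (0:ℝ) ≤ 1 - (a + b)) (div_pos hb1 hu1).le (div_pos hb2 hu2).le
      zero_le_one (by ring)
    rw [Real.one_rpow, mul_one, mul_one] at key2
    have hS : 0 < u1 ^ a * u2 ^ b := by positivity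
    have hrw1 : (z.1 / u1) ^ a * (z.2 / u2) ^ b * (u1 ^ a * u2 ^ b) = z.1 ^ a * z.2 ^ b := by
      rw [Real.div_rpow hz1 hu1.le, Real.div_rpow hz2 hu2.le]
      field_simp
    have hrw2 : (zb.1 / u1) ^ a * (zb.2 / u2) ^ b * (u1 ^ a * u2 ^ b)
        = zb.1 ^ a * zb.2 ^ b := by
      rw [Real.div_rpow hb1.le hu1.le, Real.div_rpow hb2.le hu2.le]
      field_simp
    have k1 : z.1 ^ a * z.2 ^ b
        < (a * (z.1 / u1) + b * (z.2 / u2) + (1 - (a + b))) * (u1 ^ a * u2 ^ b) := by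
      rw [← hrw1]
      exact mul_lt_mul_of_pos_right key1 hS
    have k2 : zb.1 ^ a * zb.2 ^ b
        ≤ (a * (zb.1 / u1) + b * (zb.2 / u2) + (1 - (a + b))) * (u1 ^ a * u2 ^ b) := by
      rw [← hrw2]
      exact mul_le_mul_of_nonneg_right key2 hS.le
    have E : (1 - t) * (a * (z.1 / u1) + b * (z.2 / u2) + (1 - (a + b)))
        + t * (a * (zb.1 / u1) + b * (zb.2 / u2) + (1 - (a + b))) = 1 := by
      field_simp
      ring
    calc (1 - t) * (q * z.1 ^ a * z.2 ^ b) + t * (q * zb.1 ^ a * zb.2 ^ b)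
        = q * ((1 - t) * (z.1 ^ a * z.2 ^ b) + t * (zb.1 ^ a * zb.2 ^ b)) := by ring
      _ < q * ((1 - t) * ((a * (z.1 / u1) + b * (z.2 / u2) + (1 - (a + b))) * (u1 ^ a * u2 ^ b))
            + t * ((a * (zb.1 / u1) + b * (zb.2 / u2) + (1 - (a + b))) * (u1 ^ a * u2 ^ b))) := by
          apply mul_lt_mul_of_pos_left _ hq0
          have h1 := mul_lt_mul_of_pos_left k1 (by linarith : (0:ℝ) < 1 - t)
          have h2 := mul_le_mul_of_nonneg_left k2 ht0.le
          linarith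
      _ = q * u1 ^ a * u2 ^ b := by
          have : (1 - t) * ((a * (z.1 / u1) + b * (z.2 / u2) + (1 - (a + b))) * (u1 ^ a * u2 ^ b))
              + t * ((a * (zb.1 / u1) + b * (zb.2 / u2) + (1 - (a + b))) * (u1 ^ a * u2 ^ b))
              = ((1 - t) * (a * (z.1 / u1) + b * (z.2 / u2) + (1 - (a + b)))
                + t * (a * (zb.1 / u1) + b * (zb.2 / u2) + (1 - (a + b)))) * (u1 ^ a * u2 ^ b) := by
            ring
          rw [this, E]
          ring
  · -- boundary case: z.1 = 0 or z.2 = 0, so F z = 0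
    have hFz : q * z.1 ^ a * z.2 ^ b = 0 := by
      rw [not_and_or] at hzpos
      rcases hzpos with h | h
      · have : z.1 = 0 := le_antisymm (not_lt.1 h) hz1
        rw [this, Real.zero_rpow ha.ne']
        ring
      · have : z.2 = 0 := le_antisymm (not_lt.1 h) hz2
        rw [this, Real.zero_rpow hb.ne']
        ring
    rw [hFz, mul_zero, zero_add]
    have hFb : 0 < q * zb.1 ^ a * zb.2 ^ b := by positivity
    have step1 : t * (q * zb.1 ^ a * zb.2 ^ b) < t ^ (a + b) * (q * zb.1 ^ a * zb.2 ^ b) := by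
      apply mul_lt_mul_of_pos_right _ hFb
      have := Real.rpow_lt_rpow_of_exponent_gt ht0 ht1 hab
      rwa [Real.rpow_one] at this
    have step2 : t ^ (a + b) * (q * zb.1 ^ a * zb.2 ^ b)
        = q * (t * zb.1) ^ a * (t * zb.2) ^ b := by
      rw [Real.mul_rpow ht0.le hb1.le, Real.mul_rpow ht0.le hb2.le, Real.rpow_add ht0]
      ring
    have step3 : q * (t * zb.1) ^ a * (t * zb.2) ^ b ≤ q * u1 ^ a * u2 ^ b := by
      have h1 : t * zb.1 ≤ u1 := by
        have := mul_nonneg (by linarith : (0:ℝ) ≤ 1 - t) hz1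
        rw [hu1_def]; linarith
      have h2 : t * zb.2 ≤ u2 := by
        have := mul_nonneg (by linarith : (0:ℝ) ≤ 1 - t) hz2
        rw [hu2_def]; linarith
      have g1 : (t * zb.1) ^ a ≤ u1 ^ a := Real.rpow_le_rpow (by positivity) h1 ha.le
      have g2 : (t * zb.2) ^ b ≤ u2 ^ b := Real.rpow_le_rpow (by positivity) h2 hb.le
      exact mul_le_mul (mul_le_mul_of_nonneg_left g1 hq0.le) g2 (by positivity)
        (by positivity)
    calc t * (q * zb.1 ^ a * zb.2 ^ b) < t ^ (a + b) * (q * zb.1 ^ a * zb.2 ^ b) := step1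
      _ = q * (t * zb.1) ^ a * (t * zb.2) ^ b := step2
      _ ≤ q * u1 ^ a * u2 ^ b := step3
end

section
/- Let 1 < q < p and let u, v, ∇u, ∇v be nonnegative real numbers (pointwise values and gradient magnitudes). For t ∈ [0,1] define γ(t) = ((1-t)u^q + t v^q)^(1/q) with gradient magnitude satisfying the chain-rule formula. Then the pointwise inequality |∇γ(t)|^p ≤ (1-t)|∇u|^p + t|∇v|^p holds in the scalar model: for all a, b, A, B ≥ 0 with (a,A) representing (u(x),|∇u(x)|) and (b,B) representing (v(x),|∇v(x)|), one has (((1-t)a^q + t b^q)^(1/q - 1) · ((1-t) a^(q-1) A + t b^(q-1) B))^p ≤ (1-t) A^p + t B^p, whenever (1-t)a^q + t b^q > 0. -/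
open Set

/-- Scalar model of the hidden convexity inequality: for `1 < q < p`, `t ∈ [0,1]`,
`a,b,A,B ≥ 0` with `(1-t)a^q + t b^q > 0`,
`(((1-t)a^q + t b^q)^(1/q - 1) · ((1-t)a^(q-1)A + t b^(q-1)B))^p ≤ (1-t)A^p + t B^p`. -/
theorem stmt_3 (p q : ℝ) (hq : 1 < q) (hqp : q < p)
    (t : ℝ) (ht : t ∈ Icc (0:ℝ) 1)
    (a b A B : ℝ) (ha : 0 ≤ a) (hb : 0 ≤ b) (hA : 0 ≤ A) (hB : 0 ≤ B)
    (hpos : 0 < (1 - t) * a ^ q + t * b ^ q) :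
    (((1 - t) * a ^ q + t * b ^ q) ^ (1 / q - 1) *
        ((1 - t) * a ^ (q - 1) * A + t * b ^ (q - 1) * B)) ^ p
      ≤ (1 - t) * A ^ p + t * B ^ p := by
  obtain ⟨ht0, ht1⟩ := ht
  have h1t : (0:ℝ) ≤ 1 - t := by linarith
  have hp1 : (1:ℝ) < p := hq.trans hqp
  have hp0 : (0:ℝ) < p := lt_trans one_pos hp1
  have hq0 : (0:ℝ) < q := lt_trans one_pos hq
  have hq1 : (0:ℝ) < q - 1 := by linarith
  set s : ℝ := p / (p - 1) with hs
  have hps : p.HolderConjugate s := Real.HolderConjugate.conjExponent hp1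
  have hsp : s.HolderConjugate p := hps.symm
  have hs0 : (0:ℝ) < s := hsp.left_pos
  set w : ℝ := (1 - t) * a ^ q + t * b ^ q with hw
  set R : ℝ := (1 - t) * A ^ p + t * B ^ p with hR
  have hR0 : (0:ℝ) ≤ R := by positivity
  set S : ℝ := (1 - t) * a ^ (q - 1) * A + t * b ^ (q - 1) * B with hS
  have hS0 : (0:ℝ) ≤ S := by positivity
  set T : ℝ := (1 - t) * a ^ ((q - 1) * s) + t * b ^ ((q - 1) * s) with hT
  have hT0 : (0:ℝ) ≤ T := by positivity
  -- Step 1 : Hölder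
  have step1 : S ≤ T ^ (1 / s) * R ^ (1 / p) := by
    have := Real.inner_le_Lp_mul_Lq_of_nonneg (Finset.univ : Finset (Fin 2)) hsp
      (f := ![(1 - t) ^ (1 / s) * a ^ (q - 1), t ^ (1 / s) * b ^ (q - 1)])
      (g := ![(1 - t) ^ (1 / p) * A, t ^ (1 / p) * B])
      (by intro i _; fin_cases i <;> simp <;> positivity)
      (by intro i _; fin_cases i <;> simp <;> positivity)
    simp only [Fin.sum_univ_two, Matrix.cons_val_zero, Matrix.cons_val_one, Matrix.head_cons]
      at this
    have e1 : ∀ x : ℝ, 0 ≤ x → x ^ (1 / s) * x ^ (1 / p) = x := by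
      intro x hx
      rw [← Real.rpow_add' hx (by rw [hsp.inv_add_inv_eq_one.symm]; simp; positivity)]
      rw [show 1 / s + 1 / p = 1 by rw [one_div, one_div, add_comm]; exact hps.inv_add_inv_eq_one]
      exact Real.rpow_one x
    have e2 : ∀ x y : ℝ, 0 ≤ x → 0 ≤ y →
        (x ^ (1 / s) * y ^ (q - 1)) ^ s = x * y ^ ((q - 1) * s) := by
      intro x y hx hy
      rw [Real.mul_rpow (by positivity) (by positivity), ← Real.rpow_mul hx,
        ← Real.rpow_mul hy, one_div, inv_mul_cancel₀ hs0.ne', Real.rpow_one]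
    have e3 : ∀ x y : ℝ, 0 ≤ x → 0 ≤ y →
        (x ^ (1 / p) * y) ^ p = x * y ^ p := by
      intro x y hx hy
      rw [Real.mul_rpow (by positivity) hy, ← Real.rpow_mul hx,
        one_div, inv_mul_cancel₀ hp0.ne', Real.rpow_one]
    calc S = ((1 - t) ^ (1/s) * a ^ (q-1)) * ((1 - t) ^ (1/p) * A)
          + (t ^ (1/s) * b ^ (q-1)) * (t ^ (1/p) * B) := by
            rw [hS]
            rw [show ((1 - t) ^ (1/s) * a ^ (q-1)) * ((1 - t) ^ (1/p) * A)
                = ((1-t) ^ (1/s) * (1-t) ^ (1/p)) * (a ^ (q-1) * A) by ring,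
              show (t ^ (1/s) * b ^ (q-1)) * (t ^ (1/p) * B)
                = (t ^ (1/s) * t ^ (1/p)) * (b ^ (q-1) * B) by ring,
              e1 _ h1t, e1 _ ht0]
            ring
      _ ≤ (((1 - t) ^ (1/s) * a ^ (q-1)) ^ s + (t ^ (1/s) * b ^ (q-1)) ^ s) ^ (1/s)
          * (((1 - t) ^ (1/p) * A) ^ p + (t ^ (1/p) * B) ^ p) ^ (1/p) := this
      _ = T ^ (1 / s) * R ^ (1 / p) := by
            rw [e2 _ _ h1t ha, e2 _ _ ht0 hb, e3 _ _ h1t hA, e3 _ _ ht0 hB]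
  -- Step 2 : concavity (power mean)
  have hexp : (q - 1) * s ≤ q := by
    rw [show (q - 1) * s = (q - 1) * p / (p - 1) by rw [hs]; ring,
      div_le_iff₀ (by linarith : (0:ℝ) < p - 1)]
    nlinarith
  have hexp0 : (0:ℝ) < (q - 1) * s := by positivity
  have step2 : T ≤ w ^ ((q - 1) * s / q) := by
    have hr1 : (1:ℝ) ≤ q / ((q - 1) * s) := (one_le_div hexp0).2 hexp
    have := Real.arith_mean_le_rpow_mean (Finset.univ : Finset (Fin 2))
      ![1 - t, t] ![a ^ ((q - 1) * s), b ^ ((q - 1) * s)]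
      (by intro i _; fin_cases i <;> simpa)
      (by simp) (by intro i _; fin_cases i <;> simp <;> positivity) hr1
    simp only [Fin.sum_univ_two, Matrix.cons_val_zero, Matrix.cons_val_one, Matrix.head_cons]
      at this
    have ea : ∀ x : ℝ, 0 ≤ x → (x ^ ((q-1)*s)) ^ (q / ((q-1)*s)) = x ^ q := by
      intro x hx
      rw [← Real.rpow_mul hx, mul_div_cancel₀ _ hexp0.ne']
    rw [ea _ ha, ea _ hb] at this
    calc T ≤ ((1 - t) * a ^ q + t * b ^ q) ^ (1 / (q / ((q-1)*s))) := this
      _ = w ^ ((q - 1) * s / q) := by rw [one_div_div]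
  -- Combine
  have step3 : S ≤ w ^ ((q - 1) / q) * R ^ (1 / p) := by
    refine le_trans step1 (mul_le_mul_of_nonneg_right ?_ (by positivity))
    calc T ^ (1 / s) ≤ (w ^ ((q - 1) * s / q)) ^ (1 / s) :=
          Real.rpow_le_rpow hT0 step2 (by positivity)
      _ = w ^ ((q - 1) / q) := by
          rw [← Real.rpow_mul hpos.le]
          congr 1
          field_simp
  calc (w ^ (1 / q - 1) * S) ^ p
      ≤ (w ^ (1 / q - 1) * (w ^ ((q - 1) / q) * R ^ (1 / p))) ^ p := by
        apply Real.rpow_le_rpow (by positivity)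
        · exact mul_le_mul_of_nonneg_left step3 (by positivity)
        · exact hp0.le
    _ = (R ^ (1 / p)) ^ p := by
        rw [← mul_assoc, ← Real.rpow_add hpos,
          show 1 / q - 1 + (q - 1) / q = 0 by field_simp; ring, Real.rpow_zero, one_mul]
    _ = R := by rw [← Real.rpow_mul hR0, one_div, inv_mul_cancel₀ hp0.ne', Real.rpow_one]
end

section
/- Let 1 < q < p, t ∈ (0,1), and a, b, A, B ≥ 0 with a ≠ b and A + B > 0 and a, b, A, B representing values and gradients with (b, B) ∈ (0,∞)². Then the inequality (((1-t)a^q + t b^q)^((1-q)/q) · ((1-t)a^(q-1) A + t b^(q-1) B))^p < (1-t)A^p + t B^p holds strictly. -/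
open Set Real

private lemma aux_rpow_ne {x y r : ℝ} (hx : 0 ≤ x) (hy : 0 ≤ y) (hr : 0 < r)
    (h : x ≠ y) : x ^ r ≠ y ^ r := by
  intro he
  apply h
  have := congrArg (· ^ r⁻¹) he
  simpa [← Real.rpow_mul hx, ← Real.rpow_mul hy, mul_inv_cancel₀ hr.ne'] using this

/-- Strict power mean inequality for two points. -/
private lemma aux_powmean_lt {r s x y t : ℝ} (hr : 0 < r) (hrs : r < s)
    (hx : 0 ≤ x) (hy : 0 ≤ y) (hxy : x ≠ y) (ht0 : 0 < t) (ht1 : t < 1) :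
    ((1 - t) * x ^ r + t * y ^ r) ^ (1 / r) < ((1 - t) * x ^ s + t * y ^ s) ^ (1 / s) := by
  have hs : 0 < s := hr.trans hrs
  have h1t : (0:ℝ) ≤ 1 - t := by linarith
  have hc : 1 < s / r := (one_lt_div hr).2 hrs
  have hX : (0:ℝ) ≤ x ^ r := rpow_nonneg hx r
  have hY : (0:ℝ) ≤ y ^ r := rpow_nonneg hy r
  have hne : x ^ r ≠ y ^ r := aux_rpow_ne hx hy hr hxy
  have key := (strictConvexOn_rpow hc).2 (mem_Ici.2 hX) (mem_Ici.2 hY) hne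
    (by linarith : (0:ℝ) < 1 - t) ht0 (by ring)
  simp only [smul_eq_mul] at key
  have h1 : (x ^ r) ^ (s / r) = x ^ s := by
    rw [← Real.rpow_mul hx]; congr 1; field_simp
  have h2 : (y ^ r) ^ (s / r) = y ^ s := by
    rw [← Real.rpow_mul hy]; congr 1; field_simp
  rw [h1, h2] at key
  have hbase : (0:ℝ) ≤ (1 - t) * x ^ r + t * y ^ r :=
    add_nonneg (mul_nonneg h1t hX) (mul_nonneg ht0.le hY)
  have h3 := Real.rpow_lt_rpow (rpow_nonneg hbase _) key (by positivity : (0:ℝ) < 1 / s)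
  rw [← Real.rpow_mul hbase, show s / r * (1 / s) = 1 / r by
    field_simp] at h3
  exact h3

/-- Two-point weighted Hölder inequality. -/
private lemma aux_holder2 {q t a b A B : ℝ} (hq : 1 < q) (ht0 : 0 < t) (ht1 : t < 1)
    (ha : 0 ≤ a) (hA : 0 ≤ A) (hb : 0 < b) (hB : 0 < B) :
    (1 - t) * a ^ (q - 1) * A + t * b ^ (q - 1) * B ≤
      ((1 - t) * a ^ q + t * b ^ q) ^ ((q - 1) / q) *
        ((1 - t) * A ^ q + t * B ^ q) ^ (1 / q) := by
  have hq0 : 0 < q := by linarith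
  have hqne : q ≠ 0 := ne_of_gt hq0
  have h1t : (0:ℝ) ≤ 1 - t := by linarith
  have hθ0 : 0 ≤ (q - 1) / q := div_nonneg (by linarith) hq0.le
  have hw0 : 0 ≤ 1 / q := by positivity
  have hθw : (q - 1) / q + 1 / q = 1 := by field_simp; ring
  have hS : 0 < (1 - t) * a ^ q + t * b ^ q := by
    have h1 : 0 < t * b ^ q := by positivity
    have h2 : 0 ≤ (1 - t) * a ^ q := mul_nonneg h1t (rpow_nonneg ha q)
    linarith
  have hT : 0 < (1 - t) * A ^ q + t * B ^ q := by
    have h1 : 0 < t * B ^ q := by positivity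
    have h2 : 0 ≤ (1 - t) * A ^ q := mul_nonneg h1t (rpow_nonneg hA q)
    linarith
  set S : ℝ := (1 - t) * a ^ q + t * b ^ q
  set T : ℝ := (1 - t) * A ^ q + t * B ^ q
  have hSθ : 0 < S ^ ((q - 1) / q) := rpow_pos_of_pos hS _
  have hTw : 0 < T ^ (1 / q) := rpow_pos_of_pos hT _
  have term : ∀ X Y : ℝ, 0 ≤ X → 0 ≤ Y →
      X ^ ((q - 1) / q) * Y ^ (1 / q) ≤
        S ^ ((q - 1) / q) * T ^ (1 / q) * ((q - 1) / q * (X / S) + 1 / q * (Y / T)) := by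
    intro X Y hX hY
    have h := Real.geom_mean_le_arith_mean2_weighted hθ0 hw0
      (div_nonneg hX hS.le) (div_nonneg hY hT.le) hθw
    have hrw : (X / S) ^ ((q - 1) / q) * (Y / T) ^ (1 / q)
        = X ^ ((q - 1) / q) * Y ^ (1 / q) / (S ^ ((q - 1) / q) * T ^ (1 / q)) := by
      rw [Real.div_rpow hX hS.le, Real.div_rpow hY hT.le]; ring
    rw [hrw, div_le_iff₀ (by positivity)] at h
    calc X ^ ((q - 1) / q) * Y ^ (1 / q)
        ≤ ((q - 1) / q * (X / S) + 1 / q * (Y / T)) * (S ^ ((q - 1) / q) * T ^ (1 / q)) := h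
      _ = S ^ ((q - 1) / q) * T ^ (1 / q) * ((q - 1) / q * (X / S) + 1 / q * (Y / T)) := by
          ring
  have t1 := term (a ^ q) (A ^ q) (rpow_nonneg ha q) (rpow_nonneg hA q)
  have t2 := term (b ^ q) (B ^ q) (rpow_nonneg hb.le q) (rpow_nonneg hB.le q)
  have e1 : (a ^ q) ^ ((q - 1) / q) = a ^ (q - 1) := by
    rw [← Real.rpow_mul ha]; congr 1; field_simp
  have e2 : (A ^ q) ^ ((1:ℝ) / q) = A := by
    rw [← Real.rpow_mul hA, show q * (1 / q) = 1 by field_simp, Real.rpow_one]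
  have e3 : (b ^ q) ^ ((q - 1) / q) = b ^ (q - 1) := by
    rw [← Real.rpow_mul hb.le]; congr 1; field_simp
  have e4 : (B ^ q) ^ ((1:ℝ) / q) = B := by
    rw [← Real.rpow_mul hB.le, show q * (1 / q) = 1 by field_simp, Real.rpow_one]
  rw [e1, e2] at t1
  rw [e3, e4] at t2
  have sum : (1 - t) * a ^ (q - 1) * A + t * b ^ (q - 1) * B ≤
      S ^ ((q - 1) / q) * T ^ (1 / q) *
        ((1 - t) * ((q - 1) / q * (a ^ q / S) + 1 / q * (A ^ q / T))
          + t * ((q - 1) / q * (b ^ q / S) + 1 / q * (B ^ q / T))) := by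
    nlinarith [mul_le_mul_of_nonneg_left t1 h1t, mul_le_mul_of_nonneg_left t2 ht0.le]
  refine sum.trans_eq ?_
  have key : (1 - t) * ((q - 1) / q * (a ^ q / S) + 1 / q * (A ^ q / T))
      + t * ((q - 1) / q * (b ^ q / S) + 1 / q * (B ^ q / T)) = 1 := by
    show (1 - t) * ((q - 1) / q * (a ^ q / ((1 - t) * a ^ q + t * b ^ q))
          + 1 / q * (A ^ q / ((1 - t) * A ^ q + t * B ^ q)))
        + t * ((q - 1) / q * (b ^ q / ((1 - t) * a ^ q + t * b ^ q))
          + 1 / q * (B ^ q / ((1 - t) * A ^ q + t * B ^ q))) = 1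
    have hSne : (1 - t) * a ^ q + t * b ^ q ≠ 0 := ne_of_gt hS
    have hTne : (1 - t) * A ^ q + t * B ^ q ≠ 0 := ne_of_gt hT
    field_simp
    ring
  rw [key, mul_one]

/-- Strict scalar hidden convexity: for `1 < q < p`, `t ∈ (0,1)`, `a,A ≥ 0`,
`(b,B) ∈ (0,∞)²`, `a ≠ b` and `A + B > 0`, the inequality
`(((1-t)a^q + t b^q)^((1-q)/q) · ((1-t)a^(q-1)A + t b^(q-1)B))^p < (1-t)A^p + t B^p`
holds strictly. -/
theorem stmt_4 (p q : ℝ) (hq : 1 < q) (hqp : q < p)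
    (t : ℝ) (ht : t ∈ Ioo (0:ℝ) 1)
    (a b A B : ℝ) (ha : 0 ≤ a) (hA : 0 ≤ A) (hb : 0 < b) (hB : 0 < B)
    (hab : a ≠ b) (hAB : 0 < A + B) :
    (((1 - t) * a ^ q + t * b ^ q) ^ ((1 - q) / q) *
        ((1 - t) * a ^ (q - 1) * A + t * b ^ (q - 1) * B)) ^ p
      < (1 - t) * A ^ p + t * B ^ p := by
  obtain ⟨ht0, ht1⟩ := ht
  have hq0 : 0 < q := by linarith
  have hq1 : 0 < q - 1 := by linarith
  have hp0 : 0 < p := by linarith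
  have h1t : (0:ℝ) ≤ 1 - t := by linarith
  have hS : 0 < (1 - t) * a ^ q + t * b ^ q := by
    have h1 : 0 < t * b ^ q := by positivity
    have h2 : 0 ≤ (1 - t) * a ^ q := mul_nonneg h1t (rpow_nonneg ha q)
    linarith
  set S : ℝ := (1 - t) * a ^ q + t * b ^ q with hSdef
  have hM : 0 ≤ (1 - t) * a ^ (q - 1) * A + t * b ^ (q - 1) * B := by
    have h1 : 0 ≤ (1 - t) * a ^ (q - 1) * A :=
      mul_nonneg (mul_nonneg h1t (rpow_nonneg ha _)) hA
    have h2 : 0 ≤ t * b ^ (q - 1) * B :=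
      mul_nonneg (mul_nonneg ht0.le (rpow_nonneg hb.le _)) hB.le
    linarith
  set M : ℝ := (1 - t) * a ^ (q - 1) * A + t * b ^ (q - 1) * B with hMdef
  have hL : 0 ≤ S ^ ((1 - q) / q) * M := mul_nonneg (rpow_nonneg hS.le _) hM
  have hcancel : S ^ ((1 - q) / q) * S ^ ((q - 1) / q) = 1 := by
    rw [← Real.rpow_add hS, show (1 - q) / q + (q - 1) / q = 0 by ring, Real.rpow_zero]
  rcases eq_or_ne A B with hABeq | hABne
  · -- A = B > 0
    subst hABeq
    have hApos : 0 < A := hB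
    have pm := aux_powmean_lt hq1 (by linarith : q - 1 < q) ha hb.le hab ht0 ht1
    have hN : 0 ≤ (1 - t) * a ^ (q - 1) + t * b ^ (q - 1) :=
      add_nonneg (mul_nonneg h1t (rpow_nonneg ha _)) (mul_nonneg ht0.le (rpow_nonneg hb.le _))
    have pm2 := Real.rpow_lt_rpow (rpow_nonneg hN _) pm hq1
    rw [← Real.rpow_mul hN, show 1 / (q - 1) * (q - 1) = 1 by field_simp, Real.rpow_one,
      ← Real.rpow_mul hS.le] at pm2
    have hMeq : M = ((1 - t) * a ^ (q - 1) + t * b ^ (q - 1)) * A := by rw [hMdef]; ring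
    have hLlt : S ^ ((1 - q) / q) * M < A := by
      have hc : 0 < S ^ ((1 - q) / q) := rpow_pos_of_pos hS _
      have step : S ^ ((1 - q) / q) * M < S ^ ((1 - q) / q) * (S ^ (1 / q * (q - 1)) * A) := by
        rw [hMeq]
        exact mul_lt_mul_of_pos_left (mul_lt_mul_of_pos_right pm2 hApos) hc
      have heq : S ^ ((1 - q) / q) * (S ^ (1 / q * (q - 1)) * A) = A := by
        rw [← mul_assoc, show (1:ℝ) / q * (q - 1) = (q - 1) / q by ring, hcancel, one_mul]
      linarith
    have final := Real.rpow_lt_rpow hL hLlt hp0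
    calc (S ^ ((1 - q) / q) * M) ^ p < A ^ p := final
      _ = (1 - t) * A ^ p + t * A ^ p := by ring
  · -- A ≠ B
    have hold := aux_holder2 hq ht0 ht1 ha hA hb hB
    have hT : 0 < (1 - t) * A ^ q + t * B ^ q := by
      have h1 : 0 < t * B ^ q := by positivity
      have h2 : 0 ≤ (1 - t) * A ^ q := mul_nonneg h1t (rpow_nonneg hA q)
      linarith
    set T : ℝ := (1 - t) * A ^ q + t * B ^ q with hTdef
    have hLT : S ^ ((1 - q) / q) * M ≤ T ^ (1 / q) := by
      have hc : 0 < S ^ ((1 - q) / q) := rpow_pos_of_pos hS _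
      calc S ^ ((1 - q) / q) * M
          ≤ S ^ ((1 - q) / q) * (S ^ ((q - 1) / q) * T ^ (1 / q)) :=
            mul_le_mul_of_nonneg_left hold hc.le
        _ = T ^ (1 / q) := by rw [← mul_assoc, hcancel, one_mul]
    have pm := aux_powmean_lt hq0 hqp hA hB.le hABne ht0 ht1
    have hR : 0 ≤ (1 - t) * A ^ p + t * B ^ p := by
      have h1 : 0 < t * B ^ p := by positivity
      have h2 : 0 ≤ (1 - t) * A ^ p := mul_nonneg h1t (rpow_nonneg hA p)
      linarith
    have hlt : S ^ ((1 - q) / q) * M < ((1 - t) * A ^ p + t * B ^ p) ^ (1 / p) :=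
      hLT.trans_lt pm
    have final := Real.rpow_lt_rpow hL hlt hp0
    rwa [← Real.rpow_mul hR, show 1 / p * p = 1 by field_simp, Real.rpow_one] at final
end

section
/- Let 1 < q < p and let g : (0,∞) → ℝ be such that t ↦ g(t)/t^(q-1) is nonincreasing on (0,∞). Define G(t) = ∫₀ᵗ g(s) ds for t ≥ 0. Then the map s ↦ G(s^(1/q)) is concave on [0,∞). -/
open Set intervalIntegral

/-- If `1 < q < p` and `g : (0,∞) → ℝ` is continuous with `t ↦ g(t)/t^(q-1)`
nonincreasing on `(0,∞)`, and `G(t) = ∫₀ᵗ g`, then `s ↦ G(s^(1/q))` is concave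
on `[0,∞)`. -/
theorem stmt_5 (p q : ℝ) (hq : 1 < q) (hqp : q < p)
    (g : ℝ → ℝ) (hgc : ContinuousOn g (Ioi 0))
    (hmono : AntitoneOn (fun t => g t / t ^ (q - 1)) (Ioi 0))
    (G : ℝ → ℝ) (hG : ∀ t ≥ (0:ℝ), G t = ∫ s in (0:ℝ)..t, g s) :
    ConcaveOn ℝ (Ici (0:ℝ)) (fun s => G (s ^ (1 / q))) := by
  have hq0 : (0:ℝ) < q := lt_trans one_pos hq
  have h1q : (0:ℝ) < 1 / q := by positivity
  by_cases hint : ∀ t > (0:ℝ), IntervalIntegrable g MeasureTheory.volume 0 t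
  · -- the integrable case
    -- derivative of the composition at s > 0
    have hderiv : ∀ s ∈ Ioi (0:ℝ), HasDerivAt (fun s => G (s ^ (1 / q)))
        ((1 / q) * (g (s ^ (1 / q)) / (s ^ (1 / q)) ^ (q - 1))) s := by
      intro s hs
      have hs0 : (0:ℝ) < s := hs
      have ht0 : (0:ℝ) < s ^ (1 / q) := Real.rpow_pos_of_pos hs0 _
      have h1 : HasDerivAt (fun u => ∫ x in (0:ℝ)..u, g x) (g (s ^ (1 / q)))
          (s ^ (1 / q)) := by
        refine intervalIntegral.integral_hasDerivAt_right (hint _ ht0) ?_ ?_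
        · exact hgc.stronglyMeasurableAtFilter isOpen_Ioi _ ht0
        · exact hgc.continuousAt (Ioi_mem_nhds ht0)
      have h2 : HasDerivAt (fun s : ℝ => s ^ (1 / q)) ((1 / q) * s ^ (1 / q - 1)) s :=
        Real.hasDerivAt_rpow_const (Or.inl hs0.ne')
      have h3 := h1.comp s h2
      have heq : (fun s : ℝ => G (s ^ (1 / q))) =ᶠ[nhds s]
          (fun s : ℝ => ∫ x in (0:ℝ)..(s ^ (1 / q)), g x) := by
        filter_upwards [Ioi_mem_nhds hs0] with x hx
        exact hG _ (Real.rpow_pos_of_pos hx _).le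
      have h4 := h3.congr_of_eventuallyEq heq
      refine h4.congr_deriv ?_
      have hpow : (s ^ (1 / q)) ^ (q - 1) = s ^ (1 - 1 / q) := by
        rw [← Real.rpow_mul hs0.le]
        congr 1
        field_simp
      have hinv : s ^ (1 / q - 1) = (s ^ (1 - 1 / q))⁻¹ := by
        rw [← Real.rpow_neg hs0.le]
        ring_nf
      rw [hpow, hinv]
      ring
    -- continuity of the composition on Ici 0
    have hrpow_cont : Continuous (fun s : ℝ => s ^ (1 / q)) :=
      continuous_iff_continuousAt.mpr fun x =>
        Real.continuousAt_rpow_const x _ (Or.inr h1q.le)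
    have hprim_cont : ContinuousOn (fun t => ∫ x in (0:ℝ)..t, g x) (Ici 0) := by
      intro t₀ ht₀
      have h1 : IntervalIntegrable g MeasureTheory.volume (min 0 0) (max 0 (t₀ + 1)) := by
        rw [min_self, max_eq_right (by linarith [mem_Ici.mp ht₀])]
        exact hint _ (by linarith [mem_Ici.mp ht₀])
      have := intervalIntegral.continuousWithinAt_primitive
        (b₀ := t₀) (b₁ := (0:ℝ)) (b₂ := t₀ + 1) (MeasureTheory.measure_singleton t₀) h1
      refine this.mono_of_mem_nhdsWithin ?_
      rw [show Icc (0:ℝ) (t₀ + 1) = Ici 0 ∩ Iic (t₀ + 1) from (Ici_inter_Iic).symm]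
      exact Filter.inter_mem self_mem_nhdsWithin
        (mem_nhdsWithin_of_mem_nhds (Iic_mem_nhds (by linarith [mem_Ici.mp ht₀])))
    have hcont : ContinuousOn (fun s => G (s ^ (1 / q))) (Ici 0) := by
      refine ContinuousOn.congr
        (hprim_cont.comp hrpow_cont.continuousOn ?_) ?_
      · intro s hs
        exact Real.rpow_nonneg (mem_Ici.mp hs) _
      · intro s hs
        exact hG _ (Real.rpow_nonneg (mem_Ici.mp hs) _)
    refine AntitoneOn.concaveOn_of_deriv (convex_Ici 0) hcont ?_ ?_
    · rw [interior_Ici]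
      exact fun s hs => ((hderiv s hs).differentiableAt).differentiableWithinAt
    · rw [interior_Ici]
      intro x hx y hy hxy
      rw [(hderiv x hx).deriv, (hderiv y hy).deriv]
      have hx' : (0:ℝ) < x ^ (1 / q) := Real.rpow_pos_of_pos hx _
      have hy' : (0:ℝ) < y ^ (1 / q) := Real.rpow_pos_of_pos hy _
      have hle : x ^ (1 / q) ≤ y ^ (1 / q) :=
        Real.rpow_le_rpow (le_of_lt hx) hxy h1q.le
      exact mul_le_mul_of_nonneg_left (hmono hx' hy' hle) (by positivity)
  · -- the non-integrable case: the integral is junk value 0 everywhere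
    push_neg at hint
    obtain ⟨t₀, ht₀, hnint⟩ := hint
    have hzero : ∀ s ∈ Ici (0:ℝ), G (s ^ (1 / q)) = 0 := by
      intro s hs
      rcases eq_or_lt_of_le (mem_Ici.mp hs) with h | h
      · rw [← h, Real.zero_rpow h1q.ne', hG 0 le_rfl, intervalIntegral.integral_same]
      · have ht : (0:ℝ) < s ^ (1 / q) := Real.rpow_pos_of_pos h _
        have : ¬ IntervalIntegrable g MeasureTheory.volume 0 (s ^ (1 / q)) := by
          intro hI
          apply hnint
          rcases le_total t₀ (s ^ (1 / q)) with hc | hc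
          · exact hI.mono_set (by
              rw [uIcc_of_le ht₀.le, uIcc_of_le ht.le]
              exact Icc_subset_Icc le_rfl hc)
          · refine hI.trans (a := 0) (b := s ^ (1 / q)) (c := t₀) ?_
            apply ContinuousOn.intervalIntegrable
            apply hgc.mono
            rw [uIcc_of_le hc]
            intro x hx
            exact lt_of_lt_of_le ht hx.1
        rw [hG _ ht.le, intervalIntegral.integral_undef this]
    exact (concaveOn_const (0:ℝ) (convex_Ici 0)).congr fun s hs => (hzero s hs).symm
end

section
/- Let H : [0,∞) → ℝ be nondecreasing, convex, and strictly increasing on (0,∞). Let m : [0,1] × Ω → [0,∞) be pointwise convex in t, and suppose for some t ≠ s and α ∈ (0,1) equality holds: ∫ H(m((1-α)t+αs, x)) dμ = (1-α)∫H(m(t,x))dμ + α∫H(m(s,x))dμ. Then m((1-α)t+αs, x) = (1-α)m(t,x) + αm(s,x) and H is affine on the segment [min(m(t,x), m(s,x)), max(m(t,x),m(s,x))] for μ-a.e. x; in particular if additionally the pointwise inequality m((1-α)t+αs,x) < (1-α)m(t,x)+αm(s,x) holds on a set of positive measure where m(t,x)+m(s,x) > 0, a contradiction results. -/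
open Set MeasureTheory


lemma aux_affine {f : ℝ → ℝ} (hf : ConvexOn ℝ (Set.Ici 0) f) {a b α : ℝ}
    (ha : (0:ℝ) ≤ a) (hb : (0:ℝ) ≤ b) (hα : α ∈ Set.Ioo (0:ℝ) 1)
    (heq : f ((1-α)*a + α*b) = (1-α)*f a + α*f b) :
    ∀ β ∈ Set.Icc (0:ℝ) 1, f ((1-β)*a + β*b) = (1-β)*f a + β*f b := by
  intro β hβ
  obtain ⟨hβ0, hβ1⟩ := hβ
  obtain ⟨hα0, hα1⟩ := hα
  have hp : (0:ℝ) ≤ (1-β)*a + β*b := by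
    have h1 := mul_nonneg (by linarith : (0:ℝ) ≤ 1-β) ha
    have h2 := mul_nonneg hβ0 hb
    linarith
  have hcvxβ : f ((1-β)*a + β*b) ≤ (1-β)*f a + β*f b := by
    have := hf.2 (by exact ha) (by exact hb) (by linarith : (0:ℝ) ≤ 1-β) hβ0 (by ring)
    simpa [smul_eq_mul] using this
  rcases le_or_gt β α with hle | hlt
  · set l := (α-β)/(1-β) with hl
    have h1β : (0:ℝ) < 1-β := by linarith
    have hl0 : 0 ≤ l := div_nonneg (by linarith) h1β.le
    have hl1 : l < 1 := by rw [hl, div_lt_one h1β]; linarith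
    have key1 : (1-l)*(1-β) = 1-α := by
      rw [hl]; field_simp; ring
    have key2 : (1-l)*β + l = α := by
      rw [hl]; field_simp; ring
    have hcomb : (1-α)*a + α*b = (1-l)*((1-β)*a + β*b) + l*b := by
      linear_combination (-a) * key1 + (-b) * key2
    have hc1 : f ((1-l)*((1-β)*a + β*b) + l*b) ≤ (1-l)*f ((1-β)*a + β*b) + l*f b := by
      have := hf.2 (by exact hp) (by exact hb) (by linarith : (0:ℝ) ≤ 1-l) hl0 (by ring)
      simpa [smul_eq_mul] using this
    rw [← hcomb, heq] at hc1
    have expand : (1-l)*((1-β)*f a + β*f b) + l*f b = (1-α)*f a + α*f b := by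
      linear_combination (f a) * key1 + (f b) * key2
    have : (1-l)*((1-β)*f a + β*f b) ≤ (1-l)*f ((1-β)*a + β*b) := by linarith
    have hle2 : (1-β)*f a + β*f b ≤ f ((1-β)*a + β*b) :=
      le_of_mul_le_mul_left (by linarith [this]) (by linarith : (0:ℝ) < 1-l)
    linarith
  · set l := α/β with hl
    have hβpos : (0:ℝ) < β := by linarith
    have hl0 : 0 < l := div_pos hα0 hβpos
    have hl1 : l ≤ 1 := by rw [hl, div_le_one hβpos]; linarith
    have key1 : (1-l) + l*(1-β) = 1-α := by
      rw [hl]; field_simp; ring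
    have key2 : l*β = α := by
      rw [hl]; field_simp
    have hcomb : (1-α)*a + α*b = (1-l)*a + l*((1-β)*a + β*b) := by
      linear_combination (-a) * key1 + (-b) * key2
    have hc1 : f ((1-l)*a + l*((1-β)*a + β*b)) ≤ (1-l)*f a + l*f ((1-β)*a + β*b) := by
      have := hf.2 (by exact ha) (by exact hp) (by linarith : (0:ℝ) ≤ 1-l) hl0.le (by ring)
      simpa [smul_eq_mul] using this
    rw [← hcomb, heq] at hc1
    have expand : (1-l)*f a + l*((1-β)*f a + β*f b) = (1-α)*f a + α*f b := by
      linear_combination (f a) * key1 + (f b) * key2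
    have : l*((1-β)*f a + β*f b) ≤ l*f ((1-β)*a + β*b) := by linarith
    have hle2 : (1-β)*f a + β*f b ≤ f ((1-β)*a + β*b) :=
      le_of_mul_le_mul_left (by linarith [this]) hl0
    linarith


/-- Equality case in the convexity-under-integral lemma: if `H` is nondecreasing,
convex and strictly increasing on `(0,∞)`, `m` is pointwise convex in `t`, and
for some `t ≠ s`, `α ∈ (0,1)` the integrals satisfy
`∫ H(m((1-α)t+αs,·)) = (1-α)∫H(m(t,·)) + α∫H(m(s,·))`, then a.e.
`m((1-α)t+αs,x) = (1-α)m(t,x)+αm(s,x)` and `H` is affine on the segment between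
`m(t,x)` and `m(s,x)`; in particular, if the strict pointwise inequality holds on
a set of positive measure where `m(t,x)+m(s,x) > 0`, a contradiction results. -/
theorem stmt_11 {Ω : Type*} [MeasurableSpace Ω] (μ : Measure Ω) [IsFiniteMeasure μ]
    (H : ℝ → ℝ) (hHmono : MonotoneOn H (Ici 0)) (hHconv : ConvexOn ℝ (Ici 0) H)
    (hHstrict : StrictMonoOn H (Ioi 0))
    (m : ℝ → Ω → ℝ)
    (hmnn : ∀ t x, 0 ≤ m t x)
    (hmconv : ∀ x, ∀ t s : ℝ, ∀ α ∈ Icc (0:ℝ) 1,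
      m ((1 - α) * t + α * s) x ≤ (1 - α) * m t x + α * m s x)
    (hmeas : ∀ t : ℝ, Measurable (m t))
    (hint : ∀ t : ℝ, Integrable (fun x => H (m t x)) μ)
    (t s : ℝ) (hts : t ≠ s) (α : ℝ) (hα : α ∈ Ioo (0:ℝ) 1)
    (heq : ∫ x, H (m ((1 - α) * t + α * s) x) ∂μ
      = (1 - α) * ∫ x, H (m t x) ∂μ + α * ∫ x, H (m s x) ∂μ) :
    (∀ᵐ x ∂μ, m ((1 - α) * t + α * s) x = (1 - α) * m t x + α * m s x ∧
      ∀ β ∈ Icc (0:ℝ) 1,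
        H ((1 - β) * m t x + β * m s x) = (1 - β) * H (m t x) + β * H (m s x)) ∧
    (0 < μ {x | m ((1 - α) * t + α * s) x < (1 - α) * m t x + α * m s x ∧
        0 < m t x + m s x} → False) := by
  obtain ⟨hα0, hα1⟩ := hα
  set u := (1 - α) * t + α * s with hu
  -- pointwise chain
  have hcnn : ∀ x, (0:ℝ) ≤ (1-α) * m t x + α * m s x := fun x => by
    have h1 := mul_nonneg (by linarith : (0:ℝ) ≤ 1-α) (hmnn t x)
    have h2 := mul_nonneg hα0.le (hmnn s x)
    linarith
  have h1 : ∀ x, m u x ≤ (1-α) * m t x + α * m s x := fun x =>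
    hmconv x t s α ⟨hα0.le, hα1.le⟩
  have h2 : ∀ x, H (m u x) ≤ H ((1-α) * m t x + α * m s x) := fun x =>
    hHmono (hmnn u x) (hcnn x) (h1 x)
  have h3 : ∀ x, H ((1-α) * m t x + α * m s x) ≤ (1-α) * H (m t x) + α * H (m s x) := fun x => by
    have := hHconv.2 (hmnn t x) (hmnn s x) (by linarith : (0:ℝ) ≤ 1-α) hα0.le (by ring)
    simpa [smul_eq_mul] using this
  -- the nonnegative gap function
  set g : Ω → ℝ := fun x => (1-α) * H (m t x) + α * H (m s x) - H (m u x) with hg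
  have hgnn : 0 ≤ᵐ[μ] g := Filter.Eventually.of_forall fun x => by
    have := (h2 x).trans (h3 x); simp [hg]; linarith
  have hT : Integrable (fun x => (1-α) * H (m t x)) μ := (hint t).const_mul (1-α)
  have hS : Integrable (fun x => α * H (m s x)) μ := (hint s).const_mul α
  have hTS : Integrable (fun x => (1-α) * H (m t x) + α * H (m s x)) μ := hT.add hS
  have hgint : Integrable g μ := hTS.sub (hint u)
  have hgzero : ∫ x, g x ∂μ = 0 := by
    have e1 : ∫ x, g x ∂μ
        = (∫ x, (1-α) * H (m t x) + α * H (m s x) ∂μ) - ∫ x, H (m u x) ∂μ := by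
      simp only [hg]; exact integral_sub hTS (hint u)
    rw [e1, integral_add hT hS, integral_const_mul, integral_const_mul]
    linarith [heq]
  have hgae : g =ᵐ[μ] 0 := (integral_eq_zero_iff_of_nonneg_ae hgnn hgint).mp hgzero
  have hmain : ∀ᵐ x ∂μ, m u x = (1-α) * m t x + α * m s x ∧
      ∀ β ∈ Icc (0:ℝ) 1,
        H ((1 - β) * m t x + β * m s x) = (1 - β) * H (m t x) + β * H (m s x) := by
    filter_upwards [hgae] with x hx
    have hx' : H (m u x) = (1-α) * H (m t x) + α * H (m s x) := by
      simp [hg] at hx; linarith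
    -- equality at the middle point
    have hmid : H ((1-α) * m t x + α * m s x) = (1-α) * H (m t x) + α * H (m s x) :=
      le_antisymm (h3 x) (hx' ▸ h2 x)
    have hHeq : H (m u x) = H ((1-α) * m t x + α * m s x) := by rw [hx', hmid]
    constructor
    · by_contra hne
      have hlt : m u x < (1-α) * m t x + α * m s x := lt_of_le_of_ne (h1 x) hne
      set c := (1-α) * m t x + α * m s x with hc
      have hcpos : 0 < c := lt_of_le_of_lt (hmnn u x) hlt
      have hmidpos : 0 < (m u x + c) / 2 := by linarith [hmnn u x]
      have hA : H (m u x) ≤ H ((m u x + c) / 2) :=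
        hHmono (hmnn u x) (by linarith [hmnn u x] : (0:ℝ) ≤ (m u x + c)/2) (by linarith)
      have hB : H ((m u x + c) / 2) < H c :=
        hHstrict hmidpos hcpos (by linarith)
      rw [hHeq] at hA
      exact absurd (hA.trans_lt hB) (lt_irrefl _)
    · exact aux_affine hHconv (hmnn t x) (hmnn s x) ⟨hα0, hα1⟩ hmid
  refine ⟨hmain, fun hpos => ?_⟩
  have hsub : {x | m u x < (1 - α) * m t x + α * m s x ∧ 0 < m t x + m s x} ⊆
      {x | ¬ (m u x = (1-α) * m t x + α * m s x ∧
      ∀ β ∈ Icc (0:ℝ) 1,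
        H ((1 - β) * m t x + β * m s x) = (1 - β) * H (m t x) + β * H (m s x))} := by
    intro x hx hP
    exact absurd hP.1 (ne_of_lt hx.1)
  have : μ {x | m u x < (1 - α) * m t x + α * m s x ∧ 0 < m t x + m s x} = 0 :=
    measure_mono_null hsub hmain
  rw [this] at hpos
  exact lt_irrefl _ hpos
end
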